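/- For every integer k ≥ 1 there exists a constant c_k > 0 such that for all real k×k matrices A and B and every Lebesgue-measurable set E ⊂ ℝ, one has ∫_E |det(tA + B)| dt ≥ c_k |E|^{k+1} |det A|. -/

import Mathlib

open scoped BigOperators ENNReal NNReal RealInnerProductSpace FourierTransform Classical
open MeasureTheory Metric Set Filter

noncomputable section

namespace OIpaper

/-- `ℝ^n` as a Euclidean space. -/
abbrev Spc (n : ℕ) : Type := EuclideanSpace ℝ (Fin n)

variable {d : ℕ}

/-- Partial derivative in the `i`-th `𝐱`-coordinate. -/
def pdx (φ : Spc (d + 1) → Spc d → ℝ) (i : Fin (d + 1)) : Spc (d + 1) → Spc d → ℝ :=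
  fun X ξ => fderiv ℝ (fun Y => φ Y ξ) X (EuclideanSpace.single i 1)

/-- Partial derivative in the `j`-th `ξ`-coordinate. -/
def pdXi (φ : Spc (d + 1) → Spc d → ℝ) (j : Fin d) : Spc (d + 1) → Spc d → ℝ :=
  fun X ξ => fderiv ℝ (fun η => φ X η) ξ (EuclideanSpace.single j 1)

/-- The vector `T_j = ∇_𝐱 ∂_{ξ_j} φ`. -/
def Tvec (φ : Spc (d + 1) → Spc d → ℝ) (j : Fin d) (X : Spc (d + 1)) (ξ : Spc d) :
    Fin (d + 1) → ℝ :=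
  fun i => pdx (pdXi φ j) i X ξ

/-- Generalized cross product of `n-1` vectors in `ℝ^n`. -/
def cross (w : Fin d → Fin (d + 1) → ℝ) : Fin (d + 1) → ℝ := fun i =>
  Matrix.det (Matrix.of (Fin.snoc w (Pi.single i (1 : ℝ))))

/-- The (non-normalized) Gauss map `G₀`. -/
def G0 (φ : Spc (d + 1) → Spc d → ℝ) (X : Spc (d + 1)) (ξ : Spc d) : Fin (d + 1) → ℝ :=
  cross fun j => Tvec φ j X ξ

/-- Hörmander's condition (H1) at a point. -/
def H1At (φ : Spc (d + 1) → Spc d → ℝ) (X : Spc (d + 1)) (ξ : Spc d) : Prop :=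
  (Matrix.of fun i j => Tvec φ j X ξ i).rank = d

/-- Hessian in the `ξ` variable of a scalar function. -/
def hessXi (f : Spc d → ℝ) (ξ : Spc d) : Matrix (Fin d) (Fin d) ℝ :=
  Matrix.of fun j k =>
    fderiv ℝ (fun η => fderiv ℝ f η (EuclideanSpace.single k 1)) ξ (EuclideanSpace.single j 1)

/-- Hörmander's condition (H2) at `(𝐱; ξ₀)`. -/
def H2At (φ : Spc (d + 1) → Spc d → ℝ) (X : Spc (d + 1)) (ξ0 : Spc d) : Prop :=
  (hessXi (fun ξ => ∑ i, pdx φ i X ξ * G0 φ X ξ0 i) ξ0).det ≠ 0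

/-- Hörmander's condition (H2⁺) at `(𝐱; ξ₀)`. -/
def H2PlusAt (φ : Spc (d + 1) → Spc d → ℝ) (X : Spc (d + 1)) (ξ0 : Spc d) : Prop :=
  (hessXi (fun ξ => ∑ i, pdx φ i X ξ * G0 φ X ξ0 i) ξ0).PosDef

/-- The first-order operator `W·∇_𝐱` applied to a scalar function `g`. -/
def VD (W : Spc (d + 1) → Spc d → Fin (d + 1) → ℝ) (g : Spc (d + 1) → Spc d → ℝ) :
    Spc (d + 1) → Spc d → ℝ :=
  fun X ξ => ∑ i, W X ξ i * pdx g i X ξ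

/-- Entry `(j,k)` of the Hessian `∇_ξ² φ`, as a function of `(𝐱; ξ)`. -/
def d2Xi (φ : Spc (d + 1) → Spc d → ℝ) (j k : Fin d) : Spc (d + 1) → Spc d → ℝ :=
  fun X ξ => hessXi (fun η => φ X η) ξ j k

/-- Bourgain's condition at `(𝐱₀; ξ₀)` with respect to a vector field `W`. -/
def BourgainWith (W : Spc (d + 1) → Spc d → Fin (d + 1) → ℝ)
    (φ : Spc (d + 1) → Spc d → ℝ) (X0 : Spc (d + 1)) (ξ0 : Spc d) : Prop :=
  ∃ c : ℝ,
    (Matrix.of fun j k => VD W (VD W (d2Xi φ j k)) X0 ξ0) =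
      c • (Matrix.of fun j k => VD W (d2Xi φ j k) X0 ξ0)

/-- Bourgain's condition at `(𝐱₀; ξ₀)`. -/
def BourgainAt (φ : Spc (d + 1) → Spc d → ℝ) (X0 : Spc (d + 1)) (ξ0 : Spc d) : Prop :=
  BourgainWith (G0 φ) φ X0 ξ0

/-- The `x`-part of a point `𝐱 = (x,t) ∈ ℝ^n`. -/
def xp (X : Spc (d + 1)) : Spc d :=
  (WithLp.equiv 2 (Fin d → ℝ)).symm fun j => X j.castSucc

/-- The `t`-part of a point `𝐱 = (x,t) ∈ ℝ^n`. -/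
def tp (X : Spc (d + 1)) : ℝ := X (Fin.last d)

/-- Assemble `(x, t)` into a point of `ℝ^n`. -/
def mk' (x : Spc d) (t : ℝ) : Spc (d + 1) :=
  (WithLp.equiv 2 (Fin (d + 1) → ℝ)).symm (Fin.snoc (WithLp.equiv 2 (Fin d → ℝ) x) t)

/-- Smoothness of the phase on `B^n × B^{n-1}`. -/
def SmoothPhase (φ : Spc (d + 1) → Spc d → ℝ) : Prop :=
  ContDiffOn ℝ (⊤ : ℕ∞) (fun p : Spc (d + 1) × Spc d => φ p.1 p.2)
    (ball 0 1 ×ˢ ball 0 1)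

/-- A smooth amplitude supported in `B^n × B^{n-1}`. -/
def SmoothAmp (a : Spc (d + 1) → Spc d → ℝ) : Prop :=
  ContDiff ℝ (⊤ : ℕ∞) (fun p : Spc (d + 1) × Spc d => a p.1 p.2) ∧
    tsupport (fun p : Spc (d + 1) × Spc d => a p.1 p.2) ⊆ ball 0 1 ×ˢ ball 0 1

/-- A smooth local diffeomorphism fixing the origin. -/
def IsLocalDiffeo0 {n : ℕ} (h : Spc n → Spc n) : Prop :=
  ContDiffAt ℝ (⊤ : ℕ∞) h 0 ∧ h 0 = 0 ∧ Function.Bijective (fderiv ℝ h 0)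

/-- The pairing `⟨x, ξ⟩` of the spatial part of `𝐱` with `ξ`. -/
def inx (X : Spc (d + 1)) (ξ : Spc d) : ℝ := ∑ j, xp X j * ξ j

/-- The quadratic form `⟨Aξ, ξ⟩`. -/
def quadA (A : Matrix (Fin d) (Fin d) ℝ) (ξ : Spc d) : ℝ := ∑ j, ∑ k, A j k * ξ j * ξ k

/-- `ψ` has the shape `⟨x,ξ⟩ + t⟨Aξ,ξ⟩ + O(|t||ξ|³ + |𝐱|²|ξ|²)` near the origin,
with `A` symmetric and non-degenerate. -/
def HasNormalShape (ψ : Spc (d + 1) → Spc d → ℝ) (A : Matrix (Fin d) (Fin d) ℝ) : Prop :=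
  A.IsSymm ∧ A.det ≠ 0 ∧
    ∃ C > 0, ∀ᶠ p : Spc (d + 1) × Spc d in nhds 0,
      |ψ p.1 p.2 - inx p.1 p.2 - tp p.1 * quadA A p.2| ≤
        C * (|tp p.1| * ‖p.2‖ ^ 3 + ‖p.1‖ ^ 2 * ‖p.2‖ ^ 2)

/-- `ψ''` is a normal form of `ψ` at the origin. -/
def IsNormalFormOf (ψ ψ'' : Spc (d + 1) → Spc d → ℝ) : Prop :=
  ∃ (h : Spc (d + 1) → Spc (d + 1)) (g : Spc d → Spc d) (ρ : Spc (d + 1) → ℝ)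
      (σ : Spc d → ℝ) (A : Matrix (Fin d) (Fin d) ℝ),
    IsLocalDiffeo0 h ∧ IsLocalDiffeo0 g ∧
      ContDiffAt ℝ (⊤ : ℕ∞) ρ 0 ∧ ContDiffAt ℝ (⊤ : ℕ∞) σ 0 ∧
      (∀ᶠ p : Spc (d + 1) × Spc d in nhds 0,
        ψ'' p.1 p.2 = ψ (h p.1) (g p.2) - ρ p.1 - σ p.2) ∧
      HasNormalShape ψ'' A

/-- The matrix `∇_ξ² ∂_t ψ (0; 0)`. -/
def NFmat1 (ψ : Spc (d + 1) → Spc d → ℝ) : Matrix (Fin d) (Fin d) ℝ :=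
  Matrix.of fun j k => pdx (d2Xi ψ j k) (Fin.last d) 0 0

/-- The matrix `∇_ξ² ∂_t² ψ (0; 0)`. -/
def NFmat2 (ψ : Spc (d + 1) → Spc d → ℝ) : Matrix (Fin d) (Fin d) ℝ :=
  Matrix.of fun j k => pdx (pdx (d2Xi ψ j k) (Fin.last d)) (Fin.last d) 0 0

/-- Bourgain's condition expressed on a normal form. -/
def NFBourgain (ψ : Spc (d + 1) → Spc d → ℝ) : Prop :=
  ∃ c : ℝ, NFmat2 ψ = c • NFmat1 ψ

/-- The Hörmander-type oscillatory integral operator `T_N`. -/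
def TN (φ a : Spc (d + 1) → Spc d → ℝ) (N : ℝ) (f : Spc d → ℂ) (X : Spc (d + 1)) : ℂ :=
  ∫ ξ in ball (0 : Spc d) 1,
    Complex.exp (Complex.I * (N : ℂ) * (φ X ξ : ℂ)) * f ξ * (a X ξ : ℂ)

/-- The rescaled operator `T^λ`. -/
def Tlam (φ a : Spc (d + 1) → Spc d → ℝ) (lam : ℝ) (f : Spc d → ℂ) (X : Spc (d + 1)) : ℂ :=
  ∫ ξ in ball (0 : Spc d) 1,
    Complex.exp (Complex.I * ((lam * φ (lam⁻¹ • X) ξ : ℝ) : ℂ)) * f ξ *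
      ((a (lam⁻¹ • X) ξ : ℝ) : ℂ)

/-- Semialgebraic sets, together with (an upper bound for) the total degree of a
description. -/
inductive SABasic (n : ℕ) : Set (Spc n) → ℕ → Prop
  | eq (P : MvPolynomial (Fin n) ℝ) :
      SABasic n {x | MvPolynomial.eval (fun i => x i) P = 0} P.totalDegree
  | pos (P : MvPolynomial (Fin n) ℝ) :
      SABasic n {x | 0 < MvPolynomial.eval (fun i => x i) P} P.totalDegree
  | union {s t : Set (Spc n)} {c₁ c₂ : ℕ} :
      SABasic n s c₁ → SABasic n t c₂ → SABasic n (s ∪ t) (c₁ + c₂)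
  | inter {s t : Set (Spc n)} {c₁ c₂ : ℕ} :
      SABasic n s c₁ → SABasic n t c₂ → SABasic n (s ∩ t) (c₁ + c₂)
  | compl {s : Set (Spc n)} {c : ℕ} : SABasic n s c → SABasic n sᶜ c

/-- `S` is semialgebraic of complexity at most `E`. -/
def SemialgOfComplexity (n : ℕ) (S : Set (Spc n)) (E : ℕ) : Prop :=
  ∃ c ≤ E, SABasic n S c

/-- The common zero set of a family of polynomials. -/
def zeroLocus {N r : ℕ} (P : Fin r → MvPolynomial (Fin N) ℝ) : Set (Spc N) :=
  {z | ∀ j, MvPolynomial.eval (fun i => z i) (P j) = 0}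

/-- The gradient of the `j`-th polynomial at `z`. -/
def gradP {N r : ℕ} (P : Fin r → MvPolynomial (Fin N) ℝ) (j : Fin r) (z : Spc N) :
    Fin N → ℝ :=
  fun i => MvPolynomial.eval (fun i' => z i') (MvPolynomial.pderiv i (P j))

/-- Witness of a transverse complete intersection of degree at most `D`:
the gradients are linearly independent (equivalently the wedge is nonzero)
at every point of the common zero set, and the product of the degrees is at most `D`. -/
def TCIWitness {N r : ℕ} (P : Fin r → MvPolynomial (Fin N) ℝ) (D : ℕ) : Prop :=
  (∀ z ∈ zeroLocus P, LinearIndependent ℝ fun j => gradP P j z) ∧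
    (∏ j, (P j).totalDegree) ≤ D

/-- The tangent space at `z` of the variety cut out by `P`. -/
def TangentSet {N r : ℕ} (P : Fin r → MvPolynomial (Fin N) ℝ) (z : Spc N) :
    Set (Spc N) :=
  {u | ∀ j, ∑ i, gradP P j z i * u i = 0}

/-- The angle between a vector `u` and the coordinate subspace `span{e_1, …, e_{m1}}`. -/
def angleToCoord {N : ℕ} (m1 : ℕ) (u : Spc N) : ℝ :=
  Real.arccos (Real.sqrt (∑ i : Fin N, if (i : ℕ) < m1 then u i ^ 2 else 0) / ‖u‖)

/-- The angle between a vector `u` and a subspace `W`. -/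
def angleToSub {N : ℕ} (u : Spc N) (W : Submodule ℝ (Spc N)) [Submodule.HasOrthogonalProjection W] : ℝ :=
  Real.arccos (‖(Submodule.orthogonalProjectionOnto W u : Spc N)‖ / ‖u‖)


open Polynomial in
private lemma det_poly_lb (k : ℕ) (A B : Matrix (Fin k) (Fin k) ℝ) (hA : A.det ≠ 0) :
    ∃ xs : Multiset ℝ, Multiset.card xs = k ∧ ∀ t : ℝ,
      |A.det| * (xs.map fun x => |t - x|).prod ≤ |(t • A + B).det| := by
  obtain ⟨M, hM⟩ : ∃ M : Matrix (Fin k) (Fin k) ℝ[X],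
      ∀ i j, M i j = C (A i j) * X + C (B i j) :=
    ⟨Matrix.of fun i j => C (A i j) * X + C (B i j), fun _ _ => rfl⟩
  obtain ⟨P, hP⟩ : ∃ P : ℝ[X], P = M.det := ⟨M.det, rfl⟩
  have heval : ∀ t : ℝ, P.eval t = (t • A + B).det := by
    intro t
    have h := RingHom.map_det (evalRingHom t) M
    simp only [RingHom.mapMatrix_apply] at h
    rw [hP, show (eval t M.det) = (evalRingHom t) M.det from rfl, h]
    congr 1
    ext i j
    rw [Matrix.map_apply, hM]
    simp only [coe_evalRingHom, eval_add, eval_mul, eval_C, eval_X, Matrix.add_apply,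
      Matrix.smul_apply, smul_eq_mul]
    ring
  have hentry : ∀ i j, (M i j).natDegree ≤ 1 := fun i j => by
    rw [hM]; exact natDegree_linear_le
  have hcoe : ∀ i j, (M i j).coeff 1 = A i j := fun i j => by
    rw [hM]; simp
  have hdegle : P.natDegree ≤ k := by
    rw [hP, Matrix.det_apply']
    apply natDegree_sum_le_of_forall_le
    intro σ _
    refine le_trans (natDegree_mul_le) ?_
    rw [show ((Equiv.Perm.sign σ : ℤ) : ℝ[X]) = C ((Equiv.Perm.sign σ : ℤ) : ℝ) by
      rw [Polynomial.C_eq_intCast]]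
    rw [natDegree_C, zero_add]
    refine le_trans (natDegree_prod_le _ _) ?_
    calc (∑ i, (M (σ i) i).natDegree) ≤ ∑ _i : Fin k, 1 :=
          Finset.sum_le_sum fun i _ => hentry _ _
      _ = k := by simp
  have hcoeff : P.coeff k = A.det := by
    rw [hP, Matrix.det_apply', finset_sum_coeff, Matrix.det_apply']
    refine Finset.sum_congr rfl fun σ _ => ?_
    rw [show ((Equiv.Perm.sign σ : ℤ) : ℝ[X]) = C ((Equiv.Perm.sign σ : ℤ) : ℝ) by
      rw [Polynomial.C_eq_intCast]]
    rw [coeff_C_mul]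
    congr 1
    have h := coeff_prod_of_natDegree_le (s := Finset.univ) (fun i => M (σ i) i) 1
      fun i _ => hentry _ _
    rw [Finset.card_univ, Fintype.card_fin, mul_one] at h
    rw [h]
    exact Finset.prod_congr rfl fun i _ => hcoe _ _
  have hPk : P.coeff k ≠ 0 := hcoeff ▸ hA
  have hdeg : P.natDegree = k := le_antisymm hdegle (le_natDegree_of_ne_zero hPk)
  have hlead : P.leadingCoeff = A.det := by rw [leadingCoeff, hdeg, hcoeff]
  obtain ⟨Q, hQ⟩ : ∃ Q : ℂ[X], Q = P.map (algebraMap ℝ ℂ) := ⟨_, rfl⟩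
  have hinj : Function.Injective (algebraMap ℝ ℂ) := (algebraMap ℝ ℂ).injective
  have hQdeg : Q.natDegree = k := by rw [hQ, natDegree_map_eq_of_injective hinj, hdeg]
  have hQsplits : Splits Q := IsAlgClosed.splits Q
  have hcard : Multiset.card Q.roots = k := by
    rw [splits_iff_card_roots.mp hQsplits, hQdeg]
  have hQlead : Q.leadingCoeff = (A.det : ℂ) := by
    rw [hQ, leadingCoeff_map_of_injective hinj, hlead]
    rfl
  have hfac := hQsplits.eq_prod_roots
  refine ⟨Q.roots.map Complex.re, by simp [hcard], fun t => ?_⟩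
  have h1 : Q.eval (t : ℂ) = ((P.eval t : ℝ) : ℂ) := by
    rw [show ((t : ℂ)) = algebraMap ℝ ℂ t from rfl, hQ, eval_map, eval₂_at_apply]
    rfl
  have h2 : |P.eval t| = ‖Q.eval (t : ℂ)‖ := by
    rw [h1, Complex.norm_real, Real.norm_eq_abs]
  have h3 : ‖Q.eval (t : ℂ)‖ =
      |A.det| * (Q.roots.map fun r => ‖(t : ℂ) - r‖).prod := by
    conv_lhs => rw [hfac]
    rw [eval_mul, eval_C, norm_mul, hQlead, Complex.norm_real, Real.norm_eq_abs, eval_multiset_prod]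
    congr 1
    rw [Multiset.map_map, show ∀ m : Multiset ℂ, ‖m.prod‖ = (m.map (‖·‖)).prod from
      fun m => map_multiset_prod (normHom (α := ℂ)) m, Multiset.map_map]
    refine congrArg _ (Multiset.map_congr rfl fun r _ => ?_)
    simp
  rw [← heval, h2, h3, Multiset.map_map]
  refine mul_le_mul_of_nonneg_left ?_ (abs_nonneg _)
  refine Multiset.prod_map_le_prod_map₀ _ _ (fun _ _ => abs_nonneg _) fun r _ => ?_
  simp only [Function.comp_apply]
  calc |t - r.re| = |((t:ℂ) - r).re| := by simp
    _ ≤ ‖(t:ℂ) - r‖ := Complex.abs_re_le_norm _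

private lemma key_lintegral (k : ℕ) (a : ℝ) (xs : Multiset ℝ) (hcard : Multiset.card xs = k)
    (E : Set ℝ) (hE : MeasurableSet E) (s : ℝ) (hs : 0 < s) (f : ℝ → ℝ)
    (hf : ∀ t : ℝ, |a| * (xs.map fun x => |t - x|).prod ≤ f t) :
    ENNReal.ofReal (|a| * s ^ k) * (volume E - ENNReal.ofReal (2 * k * s)) ≤
      ∫⁻ t in E, ENNReal.ofReal (f t) := by
  classical
  set B : Set ℝ := ⋃ x ∈ xs.toFinset, ball x s with hB
  have hBopen : IsOpen B := isOpen_biUnion fun _ _ => isOpen_ball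
  have hvolB : volume B ≤ ENNReal.ofReal (2 * k * s) := by
    calc volume B ≤ ∑ x ∈ xs.toFinset, volume (ball x s) := measure_biUnion_finset_le _ _
    _ = ∑ _x ∈ xs.toFinset, ENNReal.ofReal (2 * s) := by
        simp [Real.volume_ball]
    _ = (xs.toFinset.card : ℝ≥0∞) * ENNReal.ofReal (2 * s) := by
        simp [Finset.sum_const, nsmul_eq_mul]
    _ ≤ (k : ℝ≥0∞) * ENNReal.ofReal (2 * s) := by
        gcongr
        exact_mod_cast hcard ▸ xs.toFinset_card_le
    _ = ENNReal.ofReal (2 * k * s) := by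
        rw [← ENNReal.ofReal_natCast, ← ENNReal.ofReal_mul (by positivity)]
        ring_nf
  have hlow : ∀ t ∈ E \ B, ENNReal.ofReal (|a| * s ^ k) ≤ ENNReal.ofReal (f t) := by
    intro t ht
    apply ENNReal.ofReal_le_ofReal
    refine le_trans ?_ (hf t)
    have hprod : s ^ k ≤ (xs.map fun x => |t - x|).prod := by
      rw [← hcard]
      have := Multiset.prod_map_le_prod_map₀ (s := xs) (fun _ => s) (fun x => |t - x|)
        (fun _ _ => hs.le) ?_
      · simpa using this
      · intro x hx
        have : t ∉ ball x s := fun hmem => ht.2 (mem_biUnion (Multiset.mem_toFinset.mpr hx) hmem)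
        simpa [Real.dist_eq, abs_sub_comm] using (not_lt.mp (fun h => this (mem_ball.mpr h)))
    exact mul_le_mul_of_nonneg_left hprod (abs_nonneg a)
  calc ENNReal.ofReal (|a| * s ^ k) * (volume E - ENNReal.ofReal (2 * k * s))
      ≤ ENNReal.ofReal (|a| * s ^ k) * volume (E \ B) := by
        gcongr
        exact le_trans (tsub_le_tsub_left hvolB _) (le_measure_diff)
    _ = ∫⁻ _t in E \ B, ENNReal.ofReal (|a| * s ^ k) := (setLIntegral_const _ _).symm
    _ ≤ ∫⁻ t in E \ B, ENNReal.ofReal (f t) := by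
        exact setLIntegral_mono' (hE.diff hBopen.measurableSet) hlow
    _ ≤ ∫⁻ t in E, ENNReal.ofReal (f t) :=
        lintegral_mono_set diff_subset

/-- for all real `k×k` matrices `A`, `B` and every measurable `E ⊆ ℝ`,
`∫_E |det(tA+B)| dt ≥ c_k |E|^{k+1} |det A|`. -/
theorem det_average_lower_bound (k : ℕ) (hk : 1 ≤ k) :
    ∃ c : ℝ, 0 < c ∧ ∀ (A B : Matrix (Fin k) (Fin k) ℝ) (E : Set ℝ), MeasurableSet E →
      ENNReal.ofReal (c * |A.det|) * volume E ^ (k + 1) ≤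
        ∫⁻ t in E, ENNReal.ofReal |(t • A + B).det| := by
  have hk' : (1 : ℝ) ≤ (k : ℝ) := by exact_mod_cast hk
  have h4k : (0 : ℝ) < 4 * k := by linarith
  refine ⟨(1/2) * (1/(4*(k:ℝ)))^k,
    mul_pos one_half_pos (pow_pos (one_div_pos.mpr h4k) k), ?_⟩
  intro A B E hE
  by_cases hA : A.det = 0
  · simp [hA]
  obtain ⟨xs, hcard, hlb⟩ := det_poly_lb k A B hA
  have habs : 0 < |A.det| := abs_pos.mpr hA
  have hkey : ∀ s : ℝ, 0 < s →
      ENNReal.ofReal (|A.det| * s ^ k) * (volume E - ENNReal.ofReal (2 * k * s)) ≤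
        ∫⁻ t in E, ENNReal.ofReal |(t • A + B).det| :=
    fun s hs => key_lintegral k A.det xs hcard E hE s hs _ hlb
  rcases eq_top_or_lt_top (volume E) with htop | hfin
  · refine le_trans le_top ?_
    have h1 := hkey 1 one_pos
    rw [htop, ENNReal.top_sub ENNReal.ofReal_ne_top, ENNReal.mul_top ?hne] at h1
    · exact h1
    case hne =>
      refine (ENNReal.ofReal_pos.mpr ?_).ne'
      simpa using habs
  · set m := (volume E).toReal with hmdef
    have hm : volume E = ENNReal.ofReal m := (ENNReal.ofReal_toReal hfin.ne).symm
    have hm0 : 0 ≤ m := ENNReal.toReal_nonneg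
    rcases eq_or_lt_of_le hm0 with hm0' | hmpos
    · have hz : volume E = 0 := by rw [hm, ← hm0', ENNReal.ofReal_zero]
      rw [hz]
      simp [zero_pow (Nat.succ_ne_zero k)]
    · have hs : 0 < m / (4 * (k:ℝ)) := div_pos hmpos h4k
      have h := hkey (m / (4 * (k:ℝ))) hs
      have h2 : volume E - ENNReal.ofReal (2 * k * (m / (4 * (k:ℝ)))) =
          ENNReal.ofReal (m / 2) := by
        rw [hm, ← ENNReal.ofReal_sub _ (by positivity)]
        congr 1
        field_simp
        ring
      rw [h2, ← ENNReal.ofReal_mul (by positivity)] at h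
      rw [hm, ← ENNReal.ofReal_pow hm0, ← ENNReal.ofReal_mul (by positivity)]
      refine le_trans (ENNReal.ofReal_le_ofReal (le_of_eq ?_)) h
      rw [pow_succ, div_pow, div_pow]
      field_simp
      ring

end OIpaper
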